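/- For every k ∈ {1, …, m_n}, the quantity Ξ_k := ∑_{j=1}^{m_p+1} K_{j−1}·β_k^n/(β_k^n + r_{j−1}) − (b* − c) + 1/β_k^n satisfies Ξ_k = ∑_{j=1}^{m_p+1} K_{j−1}·r_{j−1}²/(β_k^n·(β_k^n + r_{j−1})); in particular Ξ_k > 0. -/

import Mathlib

open Finset Matrix MeasureTheory

section Aux
open Polynomial

private lemma stmt10_chain_mono (m : ℕ) (β : ℕ → ℝ)
    (hmono : ∀ k, 1 ≤ k → k < m → β k < β (k + 1)) :
    ∀ i i', 1 ≤ i → i ≤ i' → i' ≤ m → β i ≤ β i' := by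
  intro i i' h1 h2 h3
  induction i' with
  | zero => omega
  | succ n ih =>
      rcases Nat.lt_or_ge i (n + 1) with h | h
      · have hn1 : 1 ≤ n := by omega
        have := ih (by omega) (by omega)
        have := hmono n hn1 (by omega)
        linarith
      · have : i = n + 1 := by omega
        simp [this]

private lemma stmt10_chain_pos (m : ℕ) (β : ℕ → ℝ) (h1 : 0 < β 1)
    (hmono : ∀ k, 1 ≤ k → k < m → β k < β (k + 1)) :
    ∀ k, 1 ≤ k → k ≤ m → 0 < β k := fun k hk1 hk2 =>
  lt_of_lt_of_le h1 (stmt10_chain_mono m β hmono 1 k le_rfl hk1 hk2)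

/-- Lagrange interpolation evaluated at 0. -/
private lemma stmt10_lag0 (n : ℕ) (r : ℕ → ℝ) (hinj : Set.InjOn r (Finset.range n)) (f : ℝ[X])
    (hf : f.degree < n) :
    ∑ j ∈ Finset.range n, f.eval (r j) * ∏ l ∈ (Finset.range n).erase j, (r l / (r l - r j))
      = f.eval 0 := by
  have h := Lagrange.eq_interpolate (v := r) hinj (by simpa using hf)
  conv_rhs => rw [h]
  rw [Lagrange.interpolate_apply, eval_finset_sum]
  refine Finset.sum_congr rfl fun j hj => ?_
  rw [eval_mul, eval_C, Lagrange.basis, eval_prod]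
  congr 1
  refine Finset.prod_congr rfl fun l hl => ?_
  rw [Lagrange.basisDivisor, eval_mul, eval_C, eval_sub, eval_X, eval_C]
  have hlj : r l ≠ r j := by
    rw [Finset.mem_erase] at hl
    exact fun hE => hl.1 (hinj (by simpa using hl.2) (by simpa using hj) hE)
  have h1 : r l - r j ≠ 0 := sub_ne_zero.mpr hlj
  have h2 : r j - r l ≠ 0 := sub_ne_zero.mpr hlj.symm
  field_simp
  ring

private noncomputable def stmt10_lin (a : ℝ) : ℝ[X] := C (-a) * X + C 1

private lemma stmt10_lin_eval (a x : ℝ) : (stmt10_lin a).eval x = 1 - a * x := by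
  simp [stmt10_lin]; ring

private lemma stmt10_lin_ne_zero (a : ℝ) : stmt10_lin a ≠ 0 := fun h => by
  have := stmt10_lin_eval a 0
  rw [h] at this; simp at this

private lemma stmt10_derivative_lin (a : ℝ) : derivative (stmt10_lin a) = C (-a) := by
  simp [stmt10_lin]

private lemma stmt10_prodLin_eval (s : Finset ℕ) (a : ℕ → ℝ) (x : ℝ) :
    (∏ i ∈ s, stmt10_lin (a i)).eval x = ∏ i ∈ s, (1 - a i * x) := by
  rw [eval_prod]; exact Finset.prod_congr rfl fun i _ => stmt10_lin_eval _ _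

private lemma stmt10_prodLin_eval_zero (s : Finset ℕ) (a : ℕ → ℝ) :
    (∏ i ∈ s, stmt10_lin (a i)).eval 0 = 1 := by
  rw [stmt10_prodLin_eval]; simp

private lemma stmt10_prodLin_natDegree_le (s : Finset ℕ) (a : ℕ → ℝ) :
    (∏ i ∈ s, stmt10_lin (a i)).natDegree ≤ s.card := by
  refine le_trans (natDegree_prod_le s fun i => stmt10_lin (a i)) ?_
  calc ∑ i ∈ s, (stmt10_lin (a i)).natDegree ≤ ∑ i ∈ s, 1 :=
        Finset.sum_le_sum fun i _ => natDegree_linear_le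
    _ = s.card := by simp

private lemma stmt10_prodLin_natDegree (s : Finset ℕ) (a : ℕ → ℝ) (ha : ∀ i ∈ s, a i ≠ 0) :
    (∏ i ∈ s, stmt10_lin (a i)).natDegree = s.card := by
  rw [natDegree_prod _ _ fun i _ => stmt10_lin_ne_zero _]
  rw [Finset.sum_congr rfl fun i hi =>
    (show (stmt10_lin (a i)).natDegree = 1 from natDegree_linear (neg_ne_zero.2 (ha i hi)))]
  simp

private lemma stmt10_prodLin_coeff_card (s : Finset ℕ) (a : ℕ → ℝ) (ha : ∀ i ∈ s, a i ≠ 0) :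
    (∏ i ∈ s, stmt10_lin (a i)).coeff s.card = (-1) ^ s.card * ∏ i ∈ s, a i := by
  rw [← stmt10_prodLin_natDegree s a ha, ← Polynomial.leadingCoeff, leadingCoeff_prod]
  rw [Finset.prod_congr rfl fun i hi =>
    (show (stmt10_lin (a i)).leadingCoeff = -a i from
      leadingCoeff_linear (neg_ne_zero.2 (ha i hi)))]
  rw [stmt10_prodLin_natDegree s a ha]
  rw [show (fun i => -a i) = fun i => (-1) * a i by funext i; ring]
  rw [Finset.prod_mul_distrib, Finset.prod_const]

private lemma stmt10_prodLin_deriv_zero (s : Finset ℕ) (a : ℕ → ℝ) :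
    (derivative (∏ i ∈ s, stmt10_lin (a i))).eval 0 = -∑ i ∈ s, a i := by
  classical
  induction s using Finset.induction_on with
  | empty => simp
  | insert _ _ hx ih =>
      rename_i x s'
      rw [Finset.prod_insert hx, derivative_mul, eval_add, eval_mul, eval_mul,
        stmt10_derivative_lin, eval_C, stmt10_prodLin_eval_zero, stmt10_lin_eval,
        Finset.sum_insert hx]
      rw [ih]; ring

private lemma stmt10_prodLin_degree_lt (s : Finset ℕ) (a : ℕ → ℝ) (n : ℕ) (h : s.card < n) :
    (∏ i ∈ s, stmt10_lin (a i)).degree < n := by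
  calc (∏ i ∈ s, stmt10_lin (a i)).degree
      ≤ ((∏ i ∈ s, stmt10_lin (a i)).natDegree : WithBot ℕ) := degree_le_natDegree
    _ ≤ (s.card : WithBot ℕ) := by exact_mod_cast stmt10_prodLin_natDegree_le s a
    _ < (n : WithBot ℕ) := by exact_mod_cast h

end Aux

/-- The (i,j) cofactor of a square matrix: (−1)^(i+j) times the determinant of the
submatrix obtained by deleting row `i` and column `j`. -/
noncomputable def cof {n : ℕ} (M : Matrix (Fin (n + 1)) (Fin (n + 1)) ℝ)
    (i j : Fin (n + 1)) : ℝ :=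
  (-1 : ℝ) ^ ((i : ℕ) + (j : ℕ)) * (M.submatrix i.succAbove j.succAbove).det

private lemma stmt10_adjugate_col_zero {n : ℕ} (A : Matrix (Fin (n + 1)) (Fin (n + 1)) ℝ)
    (j : Fin (n + 1)) : A.adjugate j 0 = cof A 0 j := by
  rw [Matrix.adjugate_apply, Matrix.det_succ_row_zero]
  rw [Finset.sum_eq_single j]
  · rw [Matrix.updateRow_self]
    rw [Pi.single_eq_same]
    have hsub : (A.updateRow 0 (Pi.single j 1)).submatrix Fin.succ j.succAbove
        = A.submatrix Fin.succ j.succAbove := by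
      ext a b
      simp [Matrix.submatrix_apply, Matrix.updateRow_apply, Fin.succ_ne_zero]
    rw [hsub, cof, Fin.succAbove_zero]
    simp
  · intro l _ hl
    rw [Matrix.updateRow_self, Pi.single_eq_of_ne hl]
    ring
  · intro h; exact absurd (Finset.mem_univ j) h

private lemma stmt10_solve_cof {n : ℕ} (A : Matrix (Fin (n + 1)) (Fin (n + 1)) ℝ)
    (hdet : A.det ≠ 0) (w : Fin (n + 1) → ℝ) (hw : A *ᵥ w = Pi.single 0 1) :
    ∀ j, w j = cof A 0 j / A.det := by
  intro j
  have hu : IsUnit A.det := isUnit_iff_ne_zero.mpr hdet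
  have h1 : w = A⁻¹ *ᵥ Pi.single 0 1 := by
    rw [← hw, Matrix.mulVec_mulVec, Matrix.nonsing_inv_mul A hu, Matrix.one_mulVec]
  rw [h1]
  rw [Matrix.mulVec_single]
  show (A⁻¹) j 0 * 1 = _
  rw [Matrix.inv_def, Matrix.smul_apply, stmt10_adjugate_col_zero, Ring.inverse_eq_inv]
  rw [smul_eq_mul]
  field_simp

theorem stmt10 (σ μ ρ lamn lamp c : ℝ)
    (hσ : 0 < σ) (hρ : 0 < ρ) (hlamn : 0 < lamn) (hlamp : 0 < lamp) (hc : 0 < c)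
    (mp mn : ℕ) (hmp : 1 ≤ mp) (hmn : 1 ≤ mn)
    (ωp βp ωn βn : ℕ → ℝ)
    (hωp : ∀ k, 1 ≤ k → k ≤ mp → 0 < ωp k)
    (hωpsum : ∑ k ∈ Finset.Icc 1 mp, ωp k = 1)
    (hβp1 : 0 < βp 1)
    (hβpmono : ∀ k, 1 ≤ k → k < mp → βp k < βp (k + 1))
    (hωn : ∀ k, 1 ≤ k → k ≤ mn → 0 < ωn k)
    (hωnsum : ∑ k ∈ Finset.Icc 1 mn, ωn k = 1)
    (hβn1 : 0 < βn 1)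
    (hβnmono : ∀ k, 1 ≤ k → k < mn → βn k < βn (k + 1))
    (r : ℕ → ℝ)
    (hroot : ∀ j, j ≤ mp →
      σ ^ 2 * (r j) ^ 2 / 2 + μ * r j - (ρ + lamn + lamp)
        + lamp * ∑ i ∈ Finset.Icc 1 mp, ωp i * βp i / (βp i - r j)
        + lamn * ∑ i ∈ Finset.Icc 1 mn, ωn i * βn i / (r j + βn i) = 0)
    (hr0 : 0 < r 0)
    (hinter : ∀ k, 1 ≤ k → k ≤ mp → r (k - 1) < βp k ∧ βp k < r k)
    (A : Matrix (Fin (mp + 1)) (Fin (mp + 1)) ℝ)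
    (hA : ∀ i j : Fin (mp + 1), A i j = if (i : ℕ) = 0 then 1 else βp i / (βp i - r j))
    (hdet : A.det ≠ 0)
    (R : ℝ)
    (hR : R = (∏ k ∈ Finset.range (mp + 1), r k) / ∏ k ∈ Finset.Icc 1 mp, βp k)
    (K : ℕ → ℝ)
    (hK : ∀ j : Fin (mp + 1), K j = R * cof A 0 j / ((r j) ^ 2 * A.det))
    (b : ℝ)
    (hb : b = c + (∑ i ∈ Finset.range (mp + 1), 1 / r i) - ∑ i ∈ Finset.Icc 1 mp, 1 / βp i)
    :
    ∀ k, 1 ≤ k → k ≤ mn →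
      ((∑ j ∈ Finset.range (mp + 1), K j * βn k / (βn k + r j)) - (b - c) + 1 / βn k
          = ∑ j ∈ Finset.range (mp + 1), K j * (r j) ^ 2 / (βn k * (βn k + r j))) ∧
      (0 < (∑ j ∈ Finset.range (mp + 1), K j * βn k / (βn k + r j)) - (b - c) + 1 / βn k) := by
  classical
  -- basic order facts
  have hβpos : ∀ i, 1 ≤ i → i ≤ mp → 0 < βp i := stmt10_chain_pos mp βp hβp1 hβpmono
  have hβmono' : ∀ i i', 1 ≤ i → i ≤ i' → i' ≤ mp → βp i ≤ βp i' :=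
    stmt10_chain_mono mp βp hβpmono
  have hrpos : ∀ j, j ≤ mp → 0 < r j := by
    intro j hj
    rcases Nat.eq_zero_or_pos j with h | h
    · rw [h]; exact hr0
    · exact lt_trans (hβpos j h hj) (hinter j h hj).2
  have hrne : ∀ j, j ≤ mp → r j ≠ 0 := fun j hj => ne_of_gt (hrpos j hj)
  have hβr : ∀ i j, 1 ≤ i → i ≤ j → j ≤ mp → βp i < r j := by
    intro i j h1 h2 h3
    exact lt_of_le_of_lt (hβmono' i j h1 h2 h3) (hinter j (by omega) h3).2
  have hrβ : ∀ i j, j < i → i ≤ mp → r j < βp i := by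
    intro i j h1 h2
    have h3 := (hinter (j + 1) (by omega) (by omega)).1
    simp only [Nat.add_sub_cancel] at h3
    exact lt_of_lt_of_le h3 (hβmono' (j + 1) i (by omega) (by omega) h2)
  have hrlt : ∀ j j', j < j' → j' ≤ mp → r j < r j' := by
    intro j j' h1 h2
    have h3 : r j < βp (j + 1) := hrβ (j + 1) j (by omega) (by omega)
    exact lt_trans h3 (lt_of_le_of_lt (hβmono' (j + 1) j' (by omega) (by omega) h2)
      (hinter j' (by omega) h2).2)
  have hinj : Set.InjOn r (Finset.range (mp + 1)) := by
    intro x hx y hy hxy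
    simp only [Finset.coe_range, Set.mem_Iio] at hx hy
    by_contra hne
    rcases Nat.lt_or_ge x y with h | h
    · exact absurd hxy (ne_of_lt (hrlt x y h (by omega)))
    · have : y < x := by omega
      exact absurd hxy.symm (ne_of_lt (hrlt y x this (by omega)))
  have hβrne : ∀ i j, 1 ≤ i → i ≤ mp → j ≤ mp → βp i - r j ≠ 0 := by
    intro i j h1 h2 h3
    rcases le_or_gt i j with h | h
    · exact ne_of_lt (by linarith [hβr i j h1 h h3])
    · exact ne_of_gt (by linarith [hrβ i j (by omega) h2])
  have hβne : ∀ i, 1 ≤ i → i ≤ mp → βp i ≠ 0 := fun i h1 h2 => ne_of_gt (hβpos i h1 h2)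
  -- products
  have hprodr : (0:ℝ) < ∏ k ∈ Finset.range (mp + 1), r k :=
    Finset.prod_pos fun k hk => hrpos k (by simp at hk; omega)
  have hprodβ : (0:ℝ) < ∏ k ∈ Finset.Icc 1 mp, βp k :=
    Finset.prod_pos fun k hk => by
      rw [Finset.mem_Icc] at hk; exact hβpos k hk.1 hk.2
  have hRpos : 0 < R := by rw [hR]; positivity
  have hRne : R ≠ 0 := ne_of_gt hRpos
  -- polynomials
  set P : Polynomial ℝ := ∏ i ∈ Finset.Icc 1 mp, stmt10_lin ((βp i)⁻¹) with hP
  set V : Polynomial ℝ := ∏ l ∈ Finset.range (mp + 1), stmt10_lin ((r l)⁻¹) with hV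
  set L : ℕ → ℝ := fun j => ∏ l ∈ (Finset.range (mp + 1)).erase j, (r l / (r l - r j)) with hL
  have hcardI : (Finset.Icc 1 mp).card = mp := by
    rw [Nat.card_Icc]; omega
  have hβainv : ∀ i ∈ Finset.Icc 1 mp, (βp i)⁻¹ ≠ 0 := by
    intro i hi; rw [Finset.mem_Icc] at hi
    exact inv_ne_zero (hβne i hi.1 hi.2)
  have hrainv : ∀ l ∈ Finset.range (mp + 1), (r l)⁻¹ ≠ 0 := by
    intro l hl; rw [Finset.mem_range] at hl
    exact inv_ne_zero (hrne l (by omega))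
  have hPdeg : P.natDegree = mp := by
    rw [hP, stmt10_prodLin_natDegree _ _ hβainv, hcardI]
  have hVdeg : V.natDegree = mp + 1 := by
    rw [hV, stmt10_prodLin_natDegree _ _ hrainv, Finset.card_range]
  have hPeval : ∀ x, P.eval x = ∏ i ∈ Finset.Icc 1 mp, (1 - (βp i)⁻¹ * x) := fun x =>
    stmt10_prodLin_eval _ _ x
  have hVevalr : ∀ j ∈ Finset.range (mp + 1), V.eval (r j) = 0 := by
    intro j hj
    rw [Finset.mem_range] at hj
    rw [hV, stmt10_prodLin_eval]
    refine Finset.prod_eq_zero (Finset.mem_range.mpr hj) ?_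
    rw [inv_mul_cancel₀ (hrne j (by omega))]; ring
  -- sum (iii): ∑ P(r j) L j = 1
  have hsum1 : ∑ j ∈ Finset.range (mp + 1), P.eval (r j) * L j = 1 := by
    have := stmt10_lag0 (mp + 1) r hinj P
      (by rw [hP]; exact stmt10_prodLin_degree_lt _ _ _ (by rw [hcardI]; omega))
    rw [this, hP, stmt10_prodLin_eval_zero]
  -- sum (i): ∑ r j * P(r j) * L j = R
  have hsumT : ∑ j ∈ Finset.range (mp + 1), (r j * P.eval (r j)) * L j = R := by
    set T : Polynomial ℝ := Polynomial.X * P + Polynomial.C R * V with hT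
    have hTdeg : T.degree < (mp + 1 : ℕ) := by
      rw [Polynomial.degree_lt_iff_coeff_zero]
      intro m hm
      obtain ⟨m', rfl⟩ : ∃ m', m = m' + 1 := ⟨m - 1, by omega⟩
      rw [hT, Polynomial.coeff_add, Polynomial.coeff_X_mul, Polynomial.coeff_C_mul]
      rcases Nat.lt_or_ge (mp) m' with h | h
      · rw [Polynomial.coeff_eq_zero_of_natDegree_lt (by omega : P.natDegree < m'),
          Polynomial.coeff_eq_zero_of_natDegree_lt (by omega : V.natDegree < m' + 1)]
        ring
      · have hm' : m' = mp := by omega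
        have hpc : P.coeff mp = (-1) ^ mp * ∏ i ∈ Finset.Icc 1 mp, (βp i)⁻¹ := by
          have h := stmt10_prodLin_coeff_card (Finset.Icc 1 mp) (fun i => (βp i)⁻¹) hβainv
          rw [hcardI] at h
          rw [hP]; exact h
        have hvc : V.coeff (mp + 1) = (-1) ^ (mp + 1) * ∏ l ∈ Finset.range (mp + 1), (r l)⁻¹ := by
          have h := stmt10_prodLin_coeff_card (Finset.range (mp + 1)) (fun l => (r l)⁻¹) hrainv
          rw [Finset.card_range] at h
          rw [hV]; exact h
        rw [hm', hpc, hvc, hR, Finset.prod_inv_distrib, Finset.prod_inv_distrib]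
        rw [pow_succ]
        field_simp
        ring
    have := stmt10_lag0 (mp + 1) r hinj T hTdeg
    have hV0 : V.eval 0 = 1 := by rw [hV]; exact stmt10_prodLin_eval_zero _ _
    have hTeval : ∀ j ∈ Finset.range (mp + 1), T.eval (r j) = r j * P.eval (r j) := by
      intro j hj
      rw [hT, Polynomial.eval_add, Polynomial.eval_mul, Polynomial.eval_mul,
        Polynomial.eval_X, Polynomial.eval_C, hVevalr j hj]
      ring
    have hT0 : T.eval 0 = R := by
      rw [hT, Polynomial.eval_add, Polynomial.eval_mul, Polynomial.eval_mul,
        Polynomial.eval_X, Polynomial.eval_C, hV0]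
      ring
    rw [← hT0, ← this]
    exact Finset.sum_congr rfl fun j hj => by rw [hTeval j hj]
  -- sum (iv): ∑ (P(r j)/ r j) * L j = ∑ 1/r - ∑ 1/β
  have hsumQ : ∑ j ∈ Finset.range (mp + 1), (P.eval (r j) / r j) * L j
      = (∑ l ∈ Finset.range (mp + 1), (r l)⁻¹) - ∑ i ∈ Finset.Icc 1 mp, (βp i)⁻¹ := by
    have hdvd : Polynomial.X ∣ (P - V) := by
      rw [Polynomial.X_dvd_iff, Polynomial.coeff_sub, Polynomial.coeff_zero_eq_eval_zero,
        Polynomial.coeff_zero_eq_eval_zero, hP, hV, stmt10_prodLin_eval_zero,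
        stmt10_prodLin_eval_zero, sub_self]
    obtain ⟨Q, hQ⟩ := hdvd
    have hQdeg : Q.degree < (mp + 1 : ℕ) := by
      rw [Polynomial.degree_lt_iff_coeff_zero]
      intro m hm
      have : Q.coeff m = (Polynomial.X * Q).coeff (m + 1) := (Polynomial.coeff_X_mul Q m).symm
      rw [this, ← hQ, Polynomial.coeff_sub,
        Polynomial.coeff_eq_zero_of_natDegree_lt (by omega : P.natDegree < m + 1),
        Polynomial.coeff_eq_zero_of_natDegree_lt (by omega : V.natDegree < m + 1), sub_self]
    have hQeval : ∀ j ∈ Finset.range (mp + 1), Q.eval (r j) = P.eval (r j) / r j := by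
      intro j hj
      have h1 : P.eval (r j) - V.eval (r j) = r j * Q.eval (r j) := by
        rw [← Polynomial.eval_sub, hQ, Polynomial.eval_mul, Polynomial.eval_X]
      rw [hVevalr j hj, sub_zero] at h1
      rw [Finset.mem_range] at hj
      field_simp [hrne j (by omega)]
      linarith [h1]
    have hQ0 : Q.eval 0 = (∑ l ∈ Finset.range (mp + 1), (r l)⁻¹)
        - ∑ i ∈ Finset.Icc 1 mp, (βp i)⁻¹ := by
      have hder : Polynomial.derivative (P - V)
          = Q + Polynomial.X * Polynomial.derivative Q := by
        rw [hQ, Polynomial.derivative_mul, Polynomial.derivative_X, one_mul]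
      have h0 := congrArg (Polynomial.eval 0) hder
      rw [Polynomial.eval_add, Polynomial.eval_mul, Polynomial.eval_X, zero_mul, add_zero,
        Polynomial.derivative_sub, Polynomial.eval_sub, hP, hV,
        stmt10_prodLin_deriv_zero, stmt10_prodLin_deriv_zero] at h0
      rw [← h0]; ring
    have := stmt10_lag0 (mp + 1) r hinj Q hQdeg
    rw [← hQ0, ← this]
    exact Finset.sum_congr rfl fun j hj => by rw [hQeval j hj]
  -- sum (ii): rows i ≥ 1
  have hsumU : ∀ i ∈ Finset.Icc 1 mp,
      ∑ j ∈ Finset.range (mp + 1),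
        (r j * ∏ i' ∈ (Finset.Icc 1 mp).erase i, (1 - (βp i')⁻¹ * r j)) * L j = 0 := by
    intro i hi
    set U : Polynomial ℝ :=
      Polynomial.X * ∏ i' ∈ (Finset.Icc 1 mp).erase i, stmt10_lin ((βp i')⁻¹) with hU
    have hUdeg : U.degree < (mp + 1 : ℕ) := by
      have h1 : U.natDegree ≤ 1 + ((Finset.Icc 1 mp).erase i).card := by
        refine le_trans Polynomial.natDegree_mul_le ?_
        gcongr
        · exact Polynomial.natDegree_X_le
        · exact stmt10_prodLin_natDegree_le _ _
      have h2 : ((Finset.Icc 1 mp).erase i).card = mp - 1 := by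
        rw [Finset.card_erase_of_mem hi, hcardI]
      calc U.degree ≤ (U.natDegree : WithBot ℕ) := Polynomial.degree_le_natDegree
        _ ≤ ((mp : ℕ) : WithBot ℕ) := by
            rw [h2] at h1
            exact_mod_cast le_trans h1 (by omega)
        _ < ((mp + 1 : ℕ) : WithBot ℕ) := by exact_mod_cast Nat.lt_succ_self mp
    have := stmt10_lag0 (mp + 1) r hinj U hUdeg
    have hU0 : U.eval 0 = 0 := by rw [hU, Polynomial.eval_mul, Polynomial.eval_X]; ring
    rw [hU0] at this
    rw [← this]
    refine Finset.sum_congr rfl fun j hj => ?_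
    rw [hU, Polynomial.eval_mul, Polynomial.eval_X, stmt10_prodLin_eval]
  -- the explicit solution vector
  set w : Fin (mp + 1) → ℝ := fun j => r j * (P.eval (r j) * L j) / R with hwdef
  have hAw : A *ᵥ w = Pi.single 0 1 := by
    funext i
    rw [Matrix.mulVec, dotProduct]
    by_cases hi : (i : ℕ) = 0
    · have hi0 : i = 0 := Fin.ext hi
      subst hi0
      rw [Pi.single_eq_same]
      have hterm : ∀ j : Fin (mp + 1), A 0 j * w j
          = (r (j : ℕ) * P.eval (r (j : ℕ)) * L (j : ℕ)) / R := by
        intro j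
        simp only [hA, hwdef, Fin.val_zero, eq_self_iff_true, if_true]
        ring
      rw [Finset.sum_congr rfl fun j _ => hterm j]
      rw [Fin.sum_univ_eq_sum_range (fun j => (r j * P.eval (r j) * L j) / R) (mp + 1)]
      rw [← Finset.sum_div]
      rw [show ∑ j ∈ Finset.range (mp + 1), r j * P.eval (r j) * L j = R from by
        rw [← hsumT]]
      field_simp
    · have hi1 : 1 ≤ (i : ℕ) := by omega
      have hi2 : (i : ℕ) ≤ mp := by omega
      have himem : (i : ℕ) ∈ Finset.Icc 1 mp := Finset.mem_Icc.mpr ⟨hi1, hi2⟩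
      rw [Pi.single_eq_of_ne (fun h => hi (by rw [h]; rfl))]
      have hterm : ∀ j : Fin (mp + 1), A i j * w j
          = (r (j : ℕ) * ∏ i' ∈ (Finset.Icc 1 mp).erase (i : ℕ),
              (1 - (βp i')⁻¹ * r (j : ℕ))) * L (j : ℕ) / R := by
        intro j
        have hjmp : (j : ℕ) ≤ mp := by omega
        simp only [hA, hwdef, if_neg hi]
        have hPsplit : P.eval (r (j : ℕ))
            = (1 - (βp (i : ℕ))⁻¹ * r (j : ℕ)) * ∏ i' ∈ (Finset.Icc 1 mp).erase (i : ℕ),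
                (1 - (βp i')⁻¹ * r (j : ℕ)) := by
          rw [hPeval]
          exact (Finset.mul_prod_erase _ _ himem).symm
        rw [hPsplit]
        have hfac : βp (i : ℕ) / (βp (i : ℕ) - r (j : ℕ))
            * (1 - (βp (i : ℕ))⁻¹ * r (j : ℕ)) = 1 := by
          field_simp [hβne _ hi1 hi2, hβrne _ _ hi1 hi2 hjmp]
        calc βp (i : ℕ) / (βp (i : ℕ) - r (j : ℕ))
              * (r (j : ℕ) * (((1 - (βp (i : ℕ))⁻¹ * r (j : ℕ))
                * ∏ i' ∈ (Finset.Icc 1 mp).erase (i : ℕ), (1 - (βp i')⁻¹ * r (j : ℕ)))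
                  * L (j : ℕ)) / R)
            = (βp (i : ℕ) / (βp (i : ℕ) - r (j : ℕ)) * (1 - (βp (i : ℕ))⁻¹ * r (j : ℕ)))
              * ((r (j : ℕ) * ∏ i' ∈ (Finset.Icc 1 mp).erase (i : ℕ),
                  (1 - (βp i')⁻¹ * r (j : ℕ))) * L (j : ℕ) / R) := by ring
          _ = _ := by rw [hfac, one_mul]
      rw [Finset.sum_congr rfl fun j _ => hterm j]
      rw [Fin.sum_univ_eq_sum_range (fun j => (r j * ∏ i' ∈ (Finset.Icc 1 mp).erase (i : ℕ),
          (1 - (βp i')⁻¹ * r j)) * L j / R) (mp + 1)]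
      rw [← Finset.sum_div, hsumU (i : ℕ) himem, zero_div]
  have hw : ∀ j : Fin (mp + 1), w j = cof A 0 j / A.det := stmt10_solve_cof A hdet w hAw
  -- K in explicit form
  have hKa : ∀ j ∈ Finset.range (mp + 1), K j = (P.eval (r j) * L j) / r j := by
    intro j hj
    rw [Finset.mem_range] at hj
    have h1 := hK ⟨j, hj⟩
    have h2 := hw ⟨j, hj⟩
    have hwj : w ⟨j, hj⟩ = r j * (P.eval (r j) * L j) / R := by
      simp only [hwdef]
    rw [hwj] at h2
    simp only [Fin.val_mk] at h1
    have hrj : r j ≠ 0 := hrne j (by omega)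
    rw [div_eq_div_iff hRne hdet] at h2
    rw [h1]
    rw [div_eq_div_iff (by simp [hrj, hdet] : r j ^ 2 * A.det ≠ 0) hrj]
    linear_combination (-(r j)) * h2
  -- positivity of a j := P(r j) * L j
  have hapos : ∀ j ∈ Finset.range (mp + 1), 0 < P.eval (r j) * L j := by
    intro j hj
    rw [Finset.mem_range] at hj
    have hjmp : j ≤ mp := by omega
    simp only [hPeval, hL]
    -- split products
    have hsplitP : ∏ i ∈ Finset.Icc 1 mp, (1 - (βp i)⁻¹ * r j)
        = (∏ i ∈ Finset.Ico 1 (j + 1), (1 - (βp i)⁻¹ * r j))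
          * ∏ i ∈ Finset.Ico (j + 1) (mp + 1), (1 - (βp i)⁻¹ * r j) := by
      rw [← Finset.Ico_add_one_right_eq_Icc]
      exact (Finset.prod_Ico_consecutive _ (by omega : 1 ≤ j + 1)
        (by omega : j + 1 ≤ mp + 1)).symm
    have hsplitL : ((Finset.range (mp + 1)).erase j) =
        Finset.range j ∪ Finset.Ico (j + 1) (mp + 1) := by
      ext x
      simp only [Finset.mem_erase, Finset.mem_range, Finset.mem_union, Finset.mem_Ico]
      omega
    have hdisj : Disjoint (Finset.range j) (Finset.Ico (j + 1) (mp + 1)) := by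
      rw [Finset.disjoint_left]
      intro x hx1 hx2
      simp only [Finset.mem_range] at hx1
      simp only [Finset.mem_Ico] at hx2
      omega
    rw [hsplitP, hsplitL, Finset.prod_union hdisj]
    have hpos2 : 0 < ∏ i ∈ Finset.Ico (j + 1) (mp + 1), (1 - (βp i)⁻¹ * r j) := by
      refine Finset.prod_pos fun i hi => ?_
      rw [Finset.mem_Ico] at hi
      have hβi : 0 < βp i := hβpos i (by omega) (by omega)
      have : r j < βp i := hrβ i j (by omega) (by omega)
      have : (βp i)⁻¹ * r j < 1 := by
        rw [inv_mul_lt_iff₀ hβi, mul_one]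
        exact this
      linarith
    have hpos3 : 0 < ∏ l ∈ Finset.Ico (j + 1) (mp + 1), (r l / (r l - r j)) := by
      refine Finset.prod_pos fun l hl => ?_
      rw [Finset.mem_Ico] at hl
      have h1 : 0 < r l := hrpos l (by omega)
      have h2 : r j < r l := hrlt j l (by omega) (by omega)
      exact div_pos h1 (by linarith)
    have hpair : 0 < (∏ i ∈ Finset.Ico 1 (j + 1), (1 - (βp i)⁻¹ * r j))
        * ∏ l ∈ Finset.range j, (r l / (r l - r j)) := by
      have hreidx : ∏ l ∈ Finset.range j, (r l / (r l - r j))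
          = ∏ i ∈ Finset.Ico 1 (j + 1), (r (i - 1) / (r (i - 1) - r j)) := by
        refine Finset.prod_nbij' (fun l => l + 1) (fun i => i - 1) ?_ ?_ ?_ ?_ ?_
        · intro a ha; simp only [Finset.mem_range] at ha; simp only [Finset.mem_Ico]; omega
        · intro a ha; simp only [Finset.mem_Ico] at ha; simp only [Finset.mem_range]; omega
        · intro a ha; show a + 1 - 1 = a; omega
        · intro a ha; simp only [Finset.mem_Ico] at ha; show a - 1 + 1 = a; omega
        · intro a ha
          show r a / (r a - r j) = r (a + 1 - 1) / (r (a + 1 - 1) - r j)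
          rw [Nat.add_sub_cancel]
      rw [hreidx, ← Finset.prod_mul_distrib]
      refine Finset.prod_pos fun i hi => ?_
      rw [Finset.mem_Ico] at hi
      have hβi : 0 < βp i := hβpos i (by omega) (by omega)
      have hcentral : βp i < r j := hβr i j (by omega) (by omega) hjmp
      have hneg1 : 1 - (βp i)⁻¹ * r j < 0 := by
        have : 1 < (βp i)⁻¹ * r j := by
          rw [lt_inv_mul_iff₀ hβi, mul_one]
          exact hcentral
        linarith
      have hi1 : 0 < r (i - 1) := hrpos (i - 1) (by omega)
      have hi2 : r (i - 1) < r j := by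
        rcases Nat.lt_or_ge (i - 1) j with h | h
        · exact hrlt (i - 1) j h hjmp
        · omega
      have hneg2 : r (i - 1) / (r (i - 1) - r j) < 0 :=
        div_neg_of_pos_of_neg hi1 (by linarith)
      exact mul_pos_of_neg_of_neg hneg1 hneg2
    calc (0:ℝ) < ((∏ i ∈ Finset.Ico 1 (j + 1), (1 - (βp i)⁻¹ * r j))
            * ∏ l ∈ Finset.range j, (r l / (r l - r j)))
          * ((∏ i ∈ Finset.Ico (j + 1) (mp + 1), (1 - (βp i)⁻¹ * r j))
            * ∏ l ∈ Finset.Ico (j + 1) (mp + 1), (r l / (r l - r j))) :=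
        mul_pos hpair (mul_pos hpos2 hpos3)
      _ = _ := by ring
  have hKpos : ∀ j ∈ Finset.range (mp + 1), 0 < K j := by
    intro j hj
    rw [hKa j hj]
    have hjmp : j ≤ mp := by rw [Finset.mem_range] at hj; omega
    exact div_pos (hapos j hj) (hrpos j hjmp)
  -- F1 and F2
  have hF1 : ∑ j ∈ Finset.range (mp + 1), K j * r j = 1 := by
    rw [← hsum1]
    refine Finset.sum_congr rfl fun j hj => ?_
    rw [hKa j hj]
    have hjmp : j ≤ mp := by rw [Finset.mem_range] at hj; omega
    field_simp [hrne j hjmp]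
  have hF2 : ∑ j ∈ Finset.range (mp + 1), K j
      = (∑ l ∈ Finset.range (mp + 1), (r l)⁻¹) - ∑ i ∈ Finset.Icc 1 mp, (βp i)⁻¹ := by
    rw [← hsumQ]
    refine Finset.sum_congr rfl fun j hj => ?_
    rw [hKa j hj]
    ring
  -- final
  intro k hk1 hk2
  have hβnk : 0 < βn k := stmt10_chain_pos mn βn hβn1 hβnmono k hk1 hk2
  have hterm : ∀ j ∈ Finset.range (mp + 1),
      K j * βn k / (βn k + r j)
        = K j * (r j) ^ 2 / (βn k * (βn k + r j)) + K j - K j * r j / βn k := by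
    intro j hj
    have hjmp : j ≤ mp := by rw [Finset.mem_range] at hj; omega
    have h1 : 0 < r j := hrpos j hjmp
    have h2 : (0:ℝ) < βn k + r j := by linarith
    field_simp
    ring
  have hsplit : ∑ j ∈ Finset.range (mp + 1), K j * βn k / (βn k + r j)
      = (∑ j ∈ Finset.range (mp + 1), K j * (r j) ^ 2 / (βn k * (βn k + r j)))
        + (∑ j ∈ Finset.range (mp + 1), K j)
        - (∑ j ∈ Finset.range (mp + 1), K j * r j) / βn k := by
    rw [Finset.sum_congr rfl hterm, Finset.sum_sub_distrib, Finset.sum_add_distrib,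
      ← Finset.sum_div]
  have hbc : b - c = (∑ l ∈ Finset.range (mp + 1), (r l)⁻¹)
      - ∑ i ∈ Finset.Icc 1 mp, (βp i)⁻¹ := by
    rw [hb]
    simp only [one_div]
    ring
  constructor
  · rw [hsplit, hF1, hF2, hbc]
    ring
  · rw [hsplit, hF1, hF2, hbc]
    have hpos : 0 < ∑ j ∈ Finset.range (mp + 1), K j * (r j) ^ 2 / (βn k * (βn k + r j)) := by
      refine Finset.sum_pos (fun j hj => ?_) ⟨0, by simp⟩
      have hjmp : j ≤ mp := by rw [Finset.mem_range] at hj; omega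
      have h1 : 0 < r j := hrpos j hjmp
      exact div_pos (mul_pos (hKpos j hj) (by positivity)) (by positivity)
    have h1β : (0:ℝ) < 1 / βn k := by positivity
    linarith
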